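/- For all n > 3 and 3 <= r <= n/2, let H'_1 be the r-uniform hypergraph formed by a clique Q of size ceil((n+2)/2) and a clique R of size floor((n+2)/2) sharing exactly two vertices x and y (i.e., all r-element subsets of Q and all r-element subsets of R are edges, with |Q ∩ R| = {x,y} and |Q ∪ R| = n). Then the minimum degree of H'_1 equals binomial(floor(n/2), r-1), and H'_1 contains no hamiltonian Berge path from x to y. -/

import Mathlib

variable {α : Type*}

/-- A Berge path with `s` vertices `v 0, ..., v (s-1)` and `s-1` edges
`e 0, ..., e (s-2)` in the hypergraph with edge set `H`:  the listed vertices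
are distinct, the listed edges are distinct edges of `H`, and
`{v i, v (i+1)} ⊆ e i` for each `i < s - 1`. -/
def IsBergePath (H : Finset (Finset α)) (s : ℕ) (v : ℕ → α) (e : ℕ → Finset α) : Prop :=
  (∀ i j, i < s → j < s → v i = v j → i = j) ∧
  (∀ i j, i < s - 1 → j < s - 1 → e i = e j → i = j) ∧
  (∀ i, i < s - 1 → e i ∈ H) ∧
  (∀ i, i < s - 1 → v i ∈ e i ∧ v (i + 1) ∈ e i)

/-- A hamiltonian Berge path from `x` to `y` in a hypergraph on `n` vertices
(the vertex set being the whole type `α`): a Berge path with `n` vertices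
starting at `x`, ending at `y`, and visiting every vertex. -/
def IsHamBergePathFromTo (H : Finset (Finset α)) (n : ℕ) (x y : α) : Prop :=
  ∃ (v : ℕ → α) (e : ℕ → Finset α),
    IsBergePath H n v e ∧ v 0 = x ∧ v (n - 1) = y ∧ ∀ z : α, ∃ i < n, v i = z

/-- The degree of a vertex in a hypergraph: the number of edges containing it. -/
def hdeg [DecidableEq α] (H : Finset (Finset α)) (w : α) : ℕ :=
  (H.filter (fun g => w ∈ g)).card

/-- Auxiliary: lower bound on degree from one clique. -/
lemma deg_ge_aux [DecidableEq α] (r : ℕ) (hr1 : 1 ≤ r) (S : Finset α) (w : α) (hw : w ∈ S)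
    (H : Finset (Finset α)) (hH : ∀ X : Finset α, X ⊆ S → X.card = r → X ∈ H) :
    (S.card - 1).choose (r - 1) ≤ hdeg H w := by
  classical
  have key : ((S.erase w).powersetCard (r - 1)).card ≤
      (H.filter (fun g => w ∈ g)).card := by
    apply Finset.card_le_card_of_injOn (fun t => insert w t)
    · intro t ht
      rw [Finset.mem_coe, Finset.mem_powersetCard] at ht
      obtain ⟨hts, htc⟩ := ht
      have hwt : w ∉ t := fun h => (Finset.mem_erase.mp (hts h)).1 rfl
      rw [Finset.mem_coe, Finset.mem_filter]
      refine ⟨hH _ ?_ ?_, Finset.mem_insert_self _ _⟩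
      · intro z hz
        rcases Finset.mem_insert.mp hz with h | h
        · exact h ▸ hw
        · exact Finset.mem_of_mem_erase (hts h)
      · rw [Finset.card_insert_of_notMem hwt, htc]; omega
    · intro s hs t ht h
      rw [Finset.mem_coe, Finset.mem_powersetCard] at hs ht
      have hws : w ∉ s := fun hh => (Finset.mem_erase.mp (hs.1 hh)).1 rfl
      have hwt : w ∉ t := fun hh => (Finset.mem_erase.mp (ht.1 hh)).1 rfl
      have := congrArg (fun u => Finset.erase u w) h
      simpa [Finset.erase_insert hws, Finset.erase_insert hwt] using this
  calc (S.card - 1).choose (r - 1)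
      = ((S.erase w).powersetCard (r - 1)).card := by
        rw [Finset.card_powersetCard, Finset.card_erase_of_mem hw]
    _ ≤ _ := key

/-- Auxiliary: exact degree for a vertex in only one clique. -/
lemma deg_eq_aux [DecidableEq α] (r : ℕ) (hr1 : 1 ≤ r) (Q S : Finset α) (w : α)
    (hw : w ∈ S) (hwQ : w ∉ Q)
    (H : Finset (Finset α))
    (hH : ∀ X : Finset α, X ∈ H ↔ X.card = r ∧ (X ⊆ Q ∨ X ⊆ S)) :
    hdeg H w = (S.card - 1).choose (r - 1) := by
  classical
  have himg : H.filter (fun g => w ∈ g) =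
      ((S.erase w).powersetCard (r - 1)).image (fun t => insert w t) := by
    ext X
    rw [Finset.mem_filter, Finset.mem_image]
    constructor
    · rintro ⟨hXH, hwX⟩
      rw [hH] at hXH
      obtain ⟨hXc, hXs⟩ := hXH
      have hXS : X ⊆ S := by
        rcases hXs with h | h
        · exact absurd (h hwX) hwQ
        · exact h
      refine ⟨X.erase w, ?_, ?_⟩
      · rw [Finset.mem_powersetCard]
        refine ⟨fun z hz => ?_, ?_⟩
        · rw [Finset.mem_erase] at hz ⊢
          exact ⟨hz.1, hXS hz.2⟩
        · rw [Finset.card_erase_of_mem hwX, hXc]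
      · exact Finset.insert_erase hwX
    · rintro ⟨t, ht, rfl⟩
      rw [Finset.mem_powersetCard] at ht
      obtain ⟨hts, htc⟩ := ht
      have hwt : w ∉ t := fun h => (Finset.mem_erase.mp (hts h)).1 rfl
      refine ⟨?_, Finset.mem_insert_self _ _⟩
      rw [hH]
      refine ⟨by rw [Finset.card_insert_of_notMem hwt, htc]; omega, Or.inr ?_⟩
      intro z hz
      rcases Finset.mem_insert.mp hz with h | h
      · exact h ▸ hw
      · exact Finset.mem_of_mem_erase (hts h)
  rw [hdeg, himg, Finset.card_image_of_injOn, Finset.card_powersetCard,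
    Finset.card_erase_of_mem hw]
  intro s hs t ht h
  rw [Finset.mem_coe, Finset.mem_powersetCard] at hs ht
  have hws : w ∉ s := fun hh => (Finset.mem_erase.mp (hs.1 hh)).1 rfl
  have hwt : w ∉ t := fun hh => (Finset.mem_erase.mp (ht.1 hh)).1 rfl
  have := congrArg (fun u => Finset.erase u w) h
  simpa [Finset.erase_insert hws, Finset.erase_insert hwt] using this

/-- Auxiliary: interior vertices of the path stay in the clique of `v 1`. -/
lemma key_aux [DecidableEq α] (n : ℕ) (hn : 3 < n) (Q R : Finset α) (v : ℕ → α)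
    (e : ℕ → Finset α)
    (hve : ∀ i, i < n - 1 → v i ∈ e i ∧ v (i + 1) ∈ e i)
    (hedge : ∀ i, i < n - 1 → e i ⊆ Q ∨ e i ⊆ R)
    (hint : ∀ i, 1 ≤ i → i ≤ n - 2 → v i ∉ Q ∨ v i ∉ R)
    (h1 : v 1 ∈ Q) :
    ∀ i, 1 ≤ i → i ≤ n - 2 → v i ∈ Q := by
  intro i
  induction i with
  | zero => omega
  | succ k ih =>
    intro h1k hk
    rcases Nat.eq_or_lt_of_le h1k with h | h
    · exact h ▸ h1
    · have hk1 : 1 ≤ k := by omega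
      have hkn : k ≤ n - 2 := by omega
      have hvk : v k ∈ Q := ih hk1 hkn
      have hvkR : v k ∉ R := by
        rcases hint k hk1 hkn with h | h
        · exact absurd hvk h
        · exact h
      have hklt : k < n - 1 := by omega
      rcases hedge k hklt with hQe | hRe
      · exact hQe (hve k hklt).2
      · exact absurd (hRe (hve k hklt).1) hvkR

/-- Auxiliary: no hamiltonian Berge path from `x` to `y`. -/
lemma no_path_aux [DecidableEq α] [Fintype α] (n : ℕ) (hn : 3 < n) (x y : α) (hxy : x ≠ y)
    (Q R : Finset α) (hQR : Q ∩ R = {x, y}) (hU : Q ∪ R = (Finset.univ : Finset α))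
    (hA : ∃ a ∈ Q, a ∉ R) (hB : ∃ b ∈ R, b ∉ Q)
    (H : Finset (Finset α)) (hH : ∀ X ∈ H, X ⊆ Q ∨ X ⊆ R) :
    ¬ IsHamBergePathFromTo H n x y := by
  rintro ⟨v, e, ⟨hvinj, heinj, heH, hve⟩, hv0, hvlast, hsurj⟩
  have hxQR : x ∈ Q ∩ R := by rw [hQR]; simp
  have hyQR : y ∈ Q ∩ R := by rw [hQR]; simp
  have hint : ∀ i, 1 ≤ i → i ≤ n - 2 → v i ∉ Q ∨ v i ∉ R := by
    intro i h1 h2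
    by_contra hcon
    push_neg at hcon
    have : v i ∈ Q ∩ R := Finset.mem_inter.mpr hcon
    rw [hQR] at this
    rcases Finset.mem_insert.mp this with h | h
    · have : i = 0 := hvinj i 0 (by omega) (by omega) (by rw [h, hv0])
      omega
    · have : i = n - 1 := hvinj i (n - 1) (by omega) (by omega)
        (by rw [Finset.mem_singleton] at h; rw [h, hvlast])
      omega
  have hedge : ∀ i, i < n - 1 → e i ⊆ Q ∨ e i ⊆ R := fun i hi => hH _ (heH i hi)
  have hv1 : v 1 ∈ Q ∪ R := hU ▸ Finset.mem_univ _
  have hfin : ∀ S T : Finset α, v 1 ∈ S →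
      (∀ i, i < n - 1 → e i ⊆ S ∨ e i ⊆ T) →
      (∀ i, 1 ≤ i → i ≤ n - 2 → v i ∉ S ∨ v i ∉ T) →
      x ∈ S → y ∈ S → (∃ b ∈ T, b ∉ S) → False := by
    intro S T h1 hed hin hxS hyS ⟨b, hbT, hbS⟩
    have hall := key_aux n hn S T v e hve hed hin h1
    obtain ⟨i, hilt, hvi⟩ := hsurj b
    have hi0 : i ≠ 0 := by
      intro h; rw [h, hv0] at hvi; exact hbS (hvi ▸ hxS)
    have hil : i ≠ n - 1 := by
      intro h; rw [h, hvlast] at hvi; exact hbS (hvi ▸ hyS)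
    exact hbS (hvi ▸ hall i (by omega) (by omega))
  rcases Finset.mem_union.mp hv1 with h1 | h1
  · exact hfin Q R h1 hedge hint (Finset.mem_inter.mp hxQR).1
      (Finset.mem_inter.mp hyQR).1 hB
  · exact hfin R Q h1 (fun i hi => (hedge i hi).symm)
      (fun i a b => (hint i a b).symm) (Finset.mem_inter.mp hxQR).2
      (Finset.mem_inter.mp hyQR).2 hA

/-- The hypergraph $H'_1$ formed by two cliques $Q$, $R$ of sizes
$\lceil (n+2)/2 \rceil$ and $\lfloor (n+2)/2 \rfloor$ sharing exactly the two
vertices $x, y$ has minimum degree $\binom{\lfloor n/2 \rfloor}{r-1}$ and no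
hamiltonian Berge path from $x$ to $y$. -/
theorem stmt_7 [Fintype α] [DecidableEq α] (n r : ℕ)
    (hcard : Fintype.card α = n) (hn : 3 < n) (hr : 3 ≤ r) (hrn : 2 * r ≤ n)
    (x y : α) (hxy : x ≠ y) (Q R : Finset α)
    (hQ : Q.card = (n + 3) / 2) (hR : R.card = (n + 2) / 2)
    (hQR : Q ∩ R = {x, y}) (hU : Q ∪ R = Finset.univ) :
    let H : Finset (Finset α) :=
      Finset.univ.powerset.filter (fun X => X.card = r ∧ (X ⊆ Q ∨ X ⊆ R))
    (∀ w : α, Nat.choose (n / 2) (r - 1) ≤ hdeg H w) ∧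
    (∃ w : α, hdeg H w = Nat.choose (n / 2) (r - 1)) ∧
    ¬ IsHamBergePathFromTo H n x y := by
  intro H
  have hxyc : ({x, y} : Finset α).card = 2 := by
    rw [Finset.card_insert_of_notMem (by simpa using hxy), Finset.card_singleton]
  have hxQR : x ∈ Q ∩ R := by rw [hQR]; simp
  have hyQR : y ∈ Q ∩ R := by rw [hQR]; simp
  have hHmem : ∀ X : Finset α, X ∈ H ↔ X.card = r ∧ (X ⊆ Q ∨ X ⊆ R) := by
    intro X
    simp only [H, Finset.mem_filter, Finset.mem_powerset]
    exact ⟨fun h => h.2, fun h => ⟨Finset.subset_univ _, h⟩⟩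
  have hQc : 3 ≤ Q.card := by omega
  have hRc : 3 ≤ R.card := by omega
  have hA : ∃ a ∈ Q, a ∉ R := by
    by_contra hcon
    push_neg at hcon
    have hsub : Q ⊆ Q ∩ R := fun z hz => Finset.mem_inter.mpr ⟨hz, hcon z hz⟩
    have := Finset.card_le_card hsub
    rw [hQR, hxyc] at this
    omega
  have hB : ∃ b ∈ R, b ∉ Q := by
    by_contra hcon
    push_neg at hcon
    have hsub : R ⊆ Q ∩ R := fun z hz => Finset.mem_inter.mpr ⟨hcon z hz, hz⟩
    have := Finset.card_le_card hsub
    rw [hQR, hxyc] at this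
    omega
  refine ⟨?_, ?_, ?_⟩
  · intro w
    have hw : w ∈ Q ∪ R := hU ▸ Finset.mem_univ _
    rcases Finset.mem_union.mp hw with h | h
    · calc Nat.choose (n / 2) (r - 1)
          ≤ (Q.card - 1).choose (r - 1) :=
            Nat.choose_le_choose _ (by omega)
        _ ≤ hdeg H w := deg_ge_aux r (by omega) Q w h H
            (fun X hs hc => (hHmem X).mpr ⟨hc, Or.inl hs⟩)
    · calc Nat.choose (n / 2) (r - 1)
          ≤ (R.card - 1).choose (r - 1) :=
            Nat.choose_le_choose _ (by omega)
        _ ≤ hdeg H w := deg_ge_aux r (by omega) R w h H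
            (fun X hs hc => (hHmem X).mpr ⟨hc, Or.inr hs⟩)
  · obtain ⟨b, hbR, hbQ⟩ := hB
    refine ⟨b, ?_⟩
    rw [deg_eq_aux r (by omega) Q R b hbR hbQ H hHmem, hR]
    congr 1
    omega
  · exact no_path_aux n hn x y hxy Q R hQR hU hA hB H
      (fun X hX => ((hHmem X).mp hX).2)
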